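/- arXiv:2604.11966 — 3 statements merged into one kernel-verified Lean document; each statement's English description precedes it below -/
import Mathlib

section
/- With Φ, Φ⁺ and S_λ = {α ∈ Φ⁺ : ⟨λ,α⟩ ≤ 0} ∪ {α ∈ −Φ⁺ : ⟨λ,α⟩ ≤ −1} as above: if α, β ∈ S_λ and α + β ∈ Φ, then α + β ∈ S_λ. -/
/-- The set of roots `S_λ = {α ∈ Φ⁺ : ⟨λ,α⟩ ≤ 0} ∪ {α ∈ −Φ⁺ : ⟨λ,α⟩ ≤ −1}` of the
Borel subgroup `B_λ = G ∩ Ad(t^λ)I`. -/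
def SRoots {X : Type*} [AddCommGroup X] (Φp : Finset (X →+ ℤ)) (l : X) :
    Set (X →+ ℤ) :=
  {α | (α ∈ Φp ∧ α l ≤ 0) ∨ (-α ∈ Φp ∧ α l ≤ -1)}

/-- If `α, β ∈ S_λ` and `α + β ∈ Φ`, then `α + β ∈ S_λ` (closedness of `S_λ`). -/
theorem SRoots_closed {X : Type*} [AddCommGroup X] [DecidableEq (X →+ ℤ)]
    (Φ Φp : Finset (X →+ ℤ))
    (h0 : (0 : X →+ ℤ) ∉ Φ)
    (hdisj : Disjoint Φp (Φp.image (fun α => -α)))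
    (hΦ : Φ = Φp ∪ Φp.image (fun α => -α))
    (hclosed : ∀ α ∈ Φp, ∀ β ∈ Φp, α + β ∈ Φ → α + β ∈ Φp)
    (l : X) (α β : X →+ ℤ)
    (hα : α ∈ SRoots Φp l) (hβ : β ∈ SRoots Φp l) (hαβ : α + β ∈ Φ) :
    α + β ∈ SRoots Φp l := by
  have hmem : α + β ∈ Φp ∨ -(α + β) ∈ Φp := by
    have h := hαβ
    rw [hΦ, Finset.mem_union, Finset.mem_image] at h
    rcases h with h | ⟨γ, hγ, hγ'⟩
    · exact Or.inl h
    · right; rw [← hγ']; simpa using hγ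
  rcases hα with ⟨ha1, ha2⟩ | ⟨ha1, ha2⟩ <;> rcases hβ with ⟨hb1, hb2⟩ | ⟨hb1, hb2⟩
  · exact Or.inl ⟨hclosed α ha1 β hb1 hαβ, by
      simp only [AddMonoidHom.add_apply]; omega⟩
  all_goals
    rcases hmem with h | h
    · exact Or.inl ⟨h, by simp only [AddMonoidHom.add_apply]; omega⟩
    · exact Or.inr ⟨h, by simp only [AddMonoidHom.add_apply, AddMonoidHom.neg_apply] at *; omega⟩
end

section
/- With Φ = Φ⁺ ⊔ (−Φ⁺) a closed positive system (the sum of two positive roots that is a root is positive), λ ∈ X, V_λ = {α ∈ Φ⁺ : ⟨λ,α⟩ ≤ 1} ∪ {α ∈ −Φ⁺ : ⟨λ,α⟩ ≤ 0}, and S_λ = {α ∈ Φ⁺ : ⟨λ,α⟩ ≤ 0} ∪ {α ∈ −Φ⁺ : ⟨λ,α⟩ ≤ −1}: if α ∈ V_λ, β ∈ S_λ, and α + β ∈ Φ, then α + β ∈ V_λ. -/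
/-- The weight set `V_λ = {α ∈ Φ⁺ : ⟨λ,α⟩ ≤ 1} ∪ {α ∈ −Φ⁺ : ⟨λ,α⟩ ≤ 0}`. -/
def VRoots {X : Type*} [AddCommGroup X] (Φp : Finset (X →+ ℤ)) (l : X) :
    Set (X →+ ℤ) :=
  {α | (α ∈ Φp ∧ α l ≤ 1) ∨ (-α ∈ Φp ∧ α l ≤ 0)}

/-- If `α ∈ V_λ`, `β ∈ S_λ`, and `α + β ∈ Φ`, then `α + β ∈ V_λ`:
`V_λ⁺` is an `Ad(B_λ)`-submodule of `𝔤` containing `𝔟_λ`. -/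
theorem VRoots_stable_under_SRoots {X : Type*} [AddCommGroup X]
    [DecidableEq (X →+ ℤ)]
    (Φ Φp : Finset (X →+ ℤ))
    (h0 : (0 : X →+ ℤ) ∉ Φ)
    (hdisj : Disjoint Φp (Φp.image (fun α => -α)))
    (hΦ : Φ = Φp ∪ Φp.image (fun α => -α))
    (hclosed : ∀ α ∈ Φp, ∀ β ∈ Φp, α + β ∈ Φ → α + β ∈ Φp)
    (l : X) (α β : X →+ ℤ)
    (hα : α ∈ VRoots Φp l) (hβ : β ∈ SRoots Φp l) (hαβ : α + β ∈ Φ) :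
    α + β ∈ VRoots Φp l := by
  have hval : (α + β) l = α l + β l := rfl
  have hmem : (α + β) ∈ Φp ∨ -(α + β) ∈ Φp := by
    rw [hΦ, Finset.mem_union, Finset.mem_image] at hαβ
    rcases hαβ with h | ⟨γ, hγ, hγe⟩
    · exact Or.inl h
    · right; rw [← hγe, neg_neg]; exact hγ
  rcases hα with ⟨hα1, hα2⟩ | ⟨hα1, hα2⟩ <;> rcases hβ with ⟨hβ1, hβ2⟩ | ⟨hβ1, hβ2⟩
  · -- both positive: closure forces α+β ∈ Φp
    exact Or.inl ⟨hclosed α hα1 β hβ1 hαβ, by omega⟩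
  · rcases hmem with h | h
    · exact Or.inl ⟨h, by omega⟩
    · exact Or.inr ⟨h, by omega⟩
  · rcases hmem with h | h
    · exact Or.inl ⟨h, by omega⟩
    · exact Or.inr ⟨h, by omega⟩
  · rcases hmem with h | h
    · exact Or.inl ⟨h, by omega⟩
    · exact Or.inr ⟨h, by omega⟩
end

section
/- Let K be an infinite field, and let X, A ∈ M_n(K). Suppose that the characteristic polynomial of X + sA is equal to the characteristic polynomial of X for every s ∈ K. Then A is nilpotent. -/
open Polynomial Matrix

/-- Evaluating the determinant of the pencil `u • M + N`. -/
private lemma eval_det_pencil {n : ℕ} {K : Type*} [Field K]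
    (M N : Matrix (Fin n) (Fin n) K) (u : K) :
    (((Polynomial.X : K[X]) • M.map Polynomial.C + N.map Polynomial.C).det).eval u
      = (u • M + N).det := by
  rw [← coe_evalRingHom, RingHom.map_det]
  congr 1
  ext i j
  simp [Matrix.map_apply]
  ring

private lemma eval_charpoly' {n : ℕ} {K : Type*} [Field K]
    (M : Matrix (Fin n) (Fin n) K) (t : K) :
    (M.charpoly).eval t = (t • 1 + (-M)).det := by
  have hcm : Matrix.charmatrix M
      = (Polynomial.X : K[X]) • (1 : Matrix (Fin n) (Fin n) K).map Polynomial.C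
        + (-M).map Polynomial.C := by
    ext i j
    rcases eq_or_ne i j with rfl | hij
    · simp [Matrix.one_apply, sub_eq_add_neg]
    · simp [hij, Matrix.one_apply_ne hij]
  rw [Matrix.charpoly, hcm, eval_det_pencil]

/-- Let `K` be an infinite field and `X, A ∈ M_n(K)`.  If the characteristic
polynomial of `X + sA` equals that of `X` for every `s ∈ K`, then `A` is
nilpotent. -/
theorem nilpotent_of_const_charpoly {n : ℕ} {K : Type*} [Field K] [Infinite K]
    (X A : Matrix (Fin n) (Fin n) K)
    (h : ∀ s : K, (X + s • A).charpoly = X.charpoly) :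
    IsNilpotent A := by
  classical
  have hinf : ({0}ᶜ : Set K).Infinite := (Set.finite_singleton 0).infinite_compl
  -- Step 1: det (1 - c • A) = 1 for every c.
  have key : ∀ c : K, (1 - c • A).det = 1 := by
    intro c
    set B : Matrix (Fin n) (Fin n) K := 1 - c • A with hB
    -- q(t) = det (t • B - X) equals charpoly X
    set q : K[X] := ((Polynomial.X : K[X]) • B.map Polynomial.C + (-X).map Polynomial.C).det with hq
    have hq_eval : ∀ t : K, q.eval t = (t • B + (-X)).det := fun t => eval_det_pencil B (-X) t
    have hqX : q = X.charpoly := by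
      apply Polynomial.funext
      intro t
      rw [hq_eval t]
      have h1 : t • B + (-X) = t • (1 : Matrix (Fin n) (Fin n) K) + (-(X + (t * c) • A)) := by
        rw [hB]; rw [smul_sub, smul_smul]; abel
      rw [h1, ← eval_charpoly' (X + (t * c) • A) t, h (t * c)]
    -- q̃(u) = det (B - u • X), its value at 0 is det B
    set qr : K[X] := ((Polynomial.X : K[X]) • (-X).map Polynomial.C + B.map Polynomial.C).det with hqr
    have hqr_eval : ∀ u : K, qr.eval u = (u • (-X) + B).det := fun u =>
      eval_det_pencil (-X) B u
    -- the "reflected" polynomial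
    set w : K[X] := ∑ k ∈ Finset.range (n + 1),
      Polynomial.C (X.charpoly.coeff k) * Polynomial.X ^ (n - k) with hw
    have hdeg : X.charpoly.natDegree = n := by
      simpa using X.charpoly_natDegree_eq_dim
    have hqrw : qr = w := by
      apply Polynomial.eq_of_infinite_eval_eq
      apply hinf.mono
      intro u hu
      have hu0 : u ≠ 0 := hu
      have h1 : qr.eval u = u ^ n * q.eval u⁻¹ := by
        rw [hqr_eval u, hq_eval u⁻¹]
        have : u • (-X) + B = u • (u⁻¹ • B + (-X)) := by
          rw [smul_add, smul_smul, mul_inv_cancel₀ hu0, one_smul]; abel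
        rw [this, Matrix.det_smul]
        simp
      have h2 : w.eval u = u ^ n * q.eval u⁻¹ := by
        rw [hqX, Polynomial.eval_eq_sum_range' (by omega : X.charpoly.natDegree < n + 1),
          Finset.mul_sum, hw]
        rw [Polynomial.eval_finset_sum]
        apply Finset.sum_congr rfl
        intro k hk
        have hkn : k ≤ n := by simpa [Nat.lt_succ_iff] using Finset.mem_range.mp hk
        have hpow : u ^ (n - k) = u ^ n * u⁻¹ ^ k := by
          rw [inv_pow, pow_sub₀ u hu0 hkn]
        simp only [Polynomial.eval_mul, Polynomial.eval_C, Polynomial.eval_pow,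
          Polynomial.eval_X, hpow]
        ring
      simp only [Set.mem_setOf_eq, h1, h2]
    -- evaluate at 0
    have hz : qr.eval 0 = B.det := by rw [hqr_eval 0]; simp
    have hwz : w.eval 0 = 1 := by
      rw [hw, Polynomial.eval_finset_sum]
      rw [Finset.sum_eq_single n]
      · have : X.charpoly.coeff n = 1 := by
          have := X.charpoly_monic
          rw [Polynomial.Monic, Polynomial.leadingCoeff, hdeg] at this
          exact this
        simp [this]
      · intro k hk hkn
        have hkn' : k < n := by
          have := Finset.mem_range.mp hk; omega
        have : n - k ≠ 0 := by omega
        simp [zero_pow this]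
      · intro hn
        exact absurd (Finset.self_mem_range_succ n) hn
    rw [← hz, hqrw, hwz]
  -- Step 2: charpoly A = X ^ n
  have hchar : A.charpoly = Polynomial.X ^ n := by
    apply Polynomial.eq_of_infinite_eval_eq
    apply hinf.mono
    intro t ht
    have ht0 : t ≠ 0 := ht
    have h1 : t • (1 : Matrix (Fin n) (Fin n) K) + (-A)
        = t • (1 - t⁻¹ • A) := by
      rw [smul_sub, smul_smul, mul_inv_cancel₀ ht0, one_smul]; abel
    have : A.charpoly.eval t = t ^ n := by
      rw [eval_charpoly' A t, h1, Matrix.det_smul, key t⁻¹]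
      simp
    simp [Set.mem_setOf_eq, this]
  -- Step 3: Cayley–Hamilton
  refine ⟨n, ?_⟩
  have := A.aeval_self_charpoly
  rw [hchar] at this
  simpa using this
end
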